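/- Let (x̄,λ̄) be a KKT point of the unperturbed problem (a,b)=(0,0). Suppose Robinson's constraint qualification holds at x̄, i.e., 0 ∈ int{g(x̄) + g'(x̄)X − K}, and that M(x̄,0,0) = {λ̄}. If X_KKT has the pseudo-isolated calmness at the origin for x̄ (relative to λ̄), then X_KKT is isolated calm at the origin (0,0) for x̄. -/

import Mathlib

open Set Filter Topology Metric Pointwise
open scoped RealInnerProductSpace Classical

noncomputable section

/-- The normal cone of convex analysis: `N_K(z) = {l | ⟪l, y - z⟫ ≤ 0 ∀ y ∈ K}`,
empty when `z ∉ K`. -/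
def nCone {E : Type*} [NormedAddCommGroup E] [InnerProductSpace ℝ E]
    (K : Set E) (z : E) : Set E :=
  {l | z ∈ K ∧ ∀ y ∈ K, ⟪l, y - z⟫ ≤ 0}

/-- The metric projection onto `K`: under the standing assumptions (`K` nonempty,
closed and convex in a finite-dimensional space) the distance minimizer exists and
is unique, so this choice-based definition is exactly the metric projection `Π_K`. -/

def projK {E : Type*} [NormedAddCommGroup E] [InnerProductSpace ℝ E]
    (K : Set E) (z : E) : E :=
  if h : ∃ p, p ∈ K ∧ ∀ y ∈ K, ‖z - p‖ ≤ ‖z - y‖ then h.choose else 0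

/-- A set `D` is a pointed closed convex cone. -/
def PointedClosedConvexCone {E : Type*} [NormedAddCommGroup E] [NormedSpace ℝ E]
    (D : Set E) : Prop :=
  IsClosed D ∧ Convex ℝ D ∧ (∀ t : ℝ, 0 ≤ t → ∀ z ∈ D, t • z ∈ D) ∧ D ∩ (-D) ⊆ {0}

/-- `K` is `C²`-cone reducible at `y`: near `y`, `K` is the inverse image of a pointed
closed convex cone `D` under a twice continuously differentiable map `Ξ` with `Ξ y = 0`
and `Ξ'(y)` surjective.  (Since the target of the reduction is a finite-dimensional
space of dimension at most `dim Y`, it can be taken to be a Euclidean space.) -/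
def C2ConeReducibleAt {Y : Type*} [NormedAddCommGroup Y] [InnerProductSpace ℝ Y]
    (K : Set Y) (y : Y) : Prop :=
  ∃ (m : ℕ) (U : Set Y) (D : Set (EuclideanSpace ℝ (Fin m)))
    (Ξ : Y → EuclideanSpace ℝ (Fin m)),
      IsOpen U ∧ y ∈ U ∧ PointedClosedConvexCone D ∧ ContDiffOn ℝ 2 Ξ U ∧
      Ξ y = 0 ∧ Function.Surjective (fderiv ℝ Ξ y) ∧ K ∩ U = {y' ∈ U | Ξ y' ∈ D}

/-- `K` is `C²`-cone reducible (at every point of `K`). -/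
def C2ConeReducible {Y : Type*} [NormedAddCommGroup Y] [InnerProductSpace ℝ Y]
    (K : Set Y) : Prop :=
  ∀ y ∈ K, C2ConeReducibleAt K y

/-- Calmness of a set-valued map `F` at `z0` for `w0 ∈ F z0`. -/
def Calm {Z W : Type*} [NormedAddCommGroup Z] [NormedAddCommGroup W]
    (F : Z → Set W) (z0 : Z) (w0 : W) : Prop :=
  ∃ κ ε δ : ℝ, 0 < κ ∧ 0 < ε ∧ 0 < δ ∧
    ∀ z : Z, ‖z - z0‖ ≤ ε → ∀ w ∈ F z, ‖w - w0‖ ≤ δ →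
      ∃ w' ∈ F z0, ‖w - w'‖ ≤ κ * ‖z - z0‖

/-- Isolated calmness of a set-valued map `F` at `z0` for `w0 ∈ F z0`. -/
def IsolatedCalm {Z W : Type*} [NormedAddCommGroup Z] [NormedAddCommGroup W]
    (F : Z → Set W) (z0 : Z) (w0 : W) : Prop :=
  ∃ κ ε δ : ℝ, 0 < κ ∧ 0 < ε ∧ 0 < δ ∧
    ∀ z : Z, ‖z - z0‖ ≤ ε → ∀ w ∈ F z, ‖w - w0‖ ≤ δ →
      ‖w - w0‖ ≤ κ * ‖z - z0‖

/-- Metric subregularity of `F` at `z0` for `w0 ∈ F z0`: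
`dist(z, F⁻¹(w0)) ≤ κ · dist(w0, F z ∩ B_δ(w0))` for `z` near `z0`; since the
right-hand side is an infimum over `F z ∩ B_δ(w0)` (`= +∞` when empty), this is
equivalently stated pointwise. -/
def MetricallySubregular {Z W : Type*} [NormedAddCommGroup Z] [NormedAddCommGroup W]
    (F : Z → Set W) (z0 : Z) (w0 : W) : Prop :=
  ∃ κ ε δ : ℝ, 0 < κ ∧ 0 < ε ∧ 0 < δ ∧
    ∀ z : Z, ‖z - z0‖ ≤ ε → ∀ w ∈ F z, ‖w - w0‖ ≤ δ →
      infDist z {z' : Z | w0 ∈ F z'} ≤ κ * ‖w0 - w‖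

/-- `φ` has directional derivative `w` at `z` in direction `h`. -/
def HasDirDeriv {E : Type*} [NormedAddCommGroup E] [NormedSpace ℝ E]
    (φ : E → E) (z h w : E) : Prop :=
  Tendsto (fun t : ℝ => t⁻¹ • (φ (z + t • h) - φ z)) (𝓝[>] (0 : ℝ)) (𝓝 w)

/-- The contingent (Bouligand) tangent cone to `s` at `z`. -/
def contCone {E : Type*} [NormedAddCommGroup E] [NormedSpace ℝ E]
    (s : Set E) (z : E) : Set E :=
  {w | ∃ (t : ℕ → ℝ) (v : ℕ → E), (∀ n, 0 < t n) ∧ Tendsto t atTop (𝓝 0) ∧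
        Tendsto v atTop (𝓝 w) ∧ ∀ n, z + t n • v n ∈ s}

/-- The negative polar cone of a set. -/
def negPolar {E : Type*} [NormedAddCommGroup E] [InnerProductSpace ℝ E]
    (C : Set E) : Set E :=
  {z | ∀ d ∈ C, ⟪z, d⟫ ≤ 0}

/-- The critical cone `C_K(y,u) = T_K(y) ∩ u^⊥`. -/
def criticalCone {E : Type*} [NormedAddCommGroup E] [InnerProductSpace ℝ E]
    (K : Set E) (y u : E) : Set E :=
  contCone K y ∩ {d | ⟪u, d⟫ = 0}

/-- The (outer) second-order tangent set `T²_K(y,h)`. -/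
def secondOrderTangent {E : Type*} [NormedAddCommGroup E] [NormedSpace ℝ E]
    (K : Set E) (y h : E) : Set E :=
  {w | ∃ (t : ℕ → ℝ) (v : ℕ → E), (∀ n, 0 < t n) ∧ Tendsto t atTop (𝓝 0) ∧
        Tendsto v atTop (𝓝 w) ∧ ∀ n, y + t n • h + ((t n) ^ 2 / 2) • v n ∈ K}

variable {X Y : Type*} [NormedAddCommGroup X] [InnerProductSpace ℝ X]
  [FiniteDimensional ℝ X] [NormedAddCommGroup Y] [InnerProductSpace ℝ Y]
  [FiniteDimensional ℝ Y]

/-- The KKT solution map of the canonically perturbed problem: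
`∇f(x) + ∇g(x)*λ = a` and `λ ∈ N_K(g(x) − b)`. -/
def sKKT (f : X → ℝ) (g : X → Y) (K : Set Y) (a : X) (b : Y) : Set (X × Y) :=
  {p | gradient f p.1 + ContinuousLinearMap.adjoint (fderiv ℝ g p.1) p.2 = a ∧
       p.2 ∈ nCone K (g p.1 - b)}

/-- The multiplier set map `M(x,a,b)`. -/
def mSet (f : X → ℝ) (g : X → Y) (K : Set Y) (x : X) (a : X) (b : Y) : Set Y :=
  {l | (x, l) ∈ sKKT f g K a b}

/-- The stationary point map `X_KKT(a,b)`. -/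
def xKKT (f : X → ℝ) (g : X → Y) (K : Set Y) (a : X) (b : Y) : Set X :=
  {x | ∃ l, (x, l) ∈ sKKT f g K a b}

/-- The Hessian `∇²ₓₓL(x,λ)` of the Lagrangian `L(·,λ)` at `x`. -/
def hessLxx (f : X → ℝ) (g : X → Y) (x : X) (l : Y) : X →L[ℝ] X :=
  fderiv ℝ (fun u => gradient (fun v => f v + ⟪l, g v⟫) u) x

/-- The multiplier `l0` is noncritical: the only solutions `(ξ,v)` of
`∇²ₓₓL(x̄,λ̄)ξ + ∇g(x̄)*v = 0`, `g'(x̄)ξ − Π_K'(g(x̄)+λ̄; g'(x̄)ξ+v) = 0` have `ξ = 0`. -/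
def Noncritical (f : X → ℝ) (g : X → Y) (K : Set Y) (x0 : X) (l0 : Y) : Prop :=
  ∀ (ξ : X) (v : Y),
    hessLxx f g x0 l0 ξ + ContinuousLinearMap.adjoint (fderiv ℝ g x0) v = 0 →
    HasDirDeriv (projK K) (g x0 + l0) (fderiv ℝ g x0 ξ + v) (fderiv ℝ g x0 ξ) →
    ξ = 0

/-- Strong calmness of `S_KKT` at the origin for `(x̄,λ̄)`. -/
def StrongCalm (f : X → ℝ) (g : X → Y) (K : Set Y) (x0 : X) (l0 : Y) : Prop :=
  ∃ δ ε κ : ℝ, 0 < δ ∧ 0 < ε ∧ 0 < κ ∧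
    ∀ (a : X) (b : Y), ‖(a, b)‖ ≤ δ →
      ∀ (x : X) (l : Y), (x, l) ∈ sKKT f g K a b → ‖(x, l) - (x0, l0)‖ ≤ ε →
        ‖x - x0‖ + infDist l (mSet f g K x0 0 0) ≤ κ * ‖(a, b)‖

/-- Pseudo-isolated calmness of `X_KKT` at the origin for `x̄` (relative to `λ̄`). -/
def PseudoIsolatedCalm (f : X → ℝ) (g : X → Y) (K : Set Y) (x0 : X) (l0 : Y) : Prop :=
  ∃ ε δ κ : ℝ, 0 < ε ∧ 0 < δ ∧ 0 < κ ∧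
    ∀ (a : X) (b : Y), ‖(a, b)‖ ≤ δ →
      ∀ (x : X) (l : Y), (x, l) ∈ sKKT f g K a b → ‖(x, l) - (x0, l0)‖ ≤ ε →
        ‖x - x0‖ ≤ κ * ‖(a, b)‖

/-- Auxiliary: limit of the (possibly scaled) stationarity equation. -/
lemma aux_lim_stat (f : X → ℝ) (g : X → Y) (hf : ContDiff ℝ 2 f) (hg : ContDiff ℝ 2 g)
    (x0 : X) {x : ℕ → X} {μ : ℕ → Y} {c : ℕ → ℝ} {e : ℕ → X} {L : Y} {c0 : ℝ}
    (hx : Tendsto x atTop (𝓝 x0)) (hμ : Tendsto μ atTop (𝓝 L))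
    (hc : Tendsto c atTop (𝓝 c0)) (he : Tendsto e atTop (𝓝 0))
    (heq : ∀ n, c n • gradient f (x n)
      + ContinuousLinearMap.adjoint (fderiv ℝ g (x n)) (μ n) = e n) :
    c0 • gradient f x0 + ContinuousLinearMap.adjoint (fderiv ℝ g x0) L = 0 := by
  have hgradc : Continuous (gradient f) := by
    have h1 : Continuous (fderiv ℝ f) := hf.continuous_fderiv (by simp)
    exact (InnerProductSpace.toDual ℝ X).symm.continuous.comp h1
  have hadjc : Continuous (fun u : X => ContinuousLinearMap.adjoint (fderiv ℝ g u)) :=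
    (ContinuousLinearMap.adjoint (𝕜 := ℝ) (E := X) (F := Y)).continuous.comp
      (hg.continuous_fderiv (by simp))
  have hTmap : Tendsto (fun n => ContinuousLinearMap.adjoint (fderiv ℝ g (x n))) atTop
      (𝓝 (ContinuousLinearMap.adjoint (fderiv ℝ g x0))) := (hadjc.tendsto x0).comp hx
  have hT : Tendsto (fun n => ContinuousLinearMap.adjoint (fderiv ℝ g (x n)) (μ n)) atTop
      (𝓝 (ContinuousLinearMap.adjoint (fderiv ℝ g x0) L)) := by
    have hcont := (isBoundedBilinearMap_apply (𝕜 := ℝ) (E := Y) (F := X)).continuous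
    exact (hcont.tendsto _).comp (hTmap.prodMk_nhds hμ)
  have hsum : Tendsto (fun n => c n • gradient f (x n)
      + ContinuousLinearMap.adjoint (fderiv ℝ g (x n)) (μ n)) atTop
      (𝓝 (c0 • gradient f x0 + ContinuousLinearMap.adjoint (fderiv ℝ g x0) L)) :=
    (hc.smul ((hgradc.tendsto x0).comp hx)).add hT
  have hsum' : Tendsto e atTop
      (𝓝 (c0 • gradient f x0 + ContinuousLinearMap.adjoint (fderiv ℝ g x0) L)) := by
    simpa only [heq] using hsum
  exact tendsto_nhds_unique hsum' he

/-- Auxiliary: limit of the normal cone condition. -/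
lemma aux_lim_cone (g : X → Y) (K : Set Y) (hg : ContDiff ℝ 2 g) (hKcl : IsClosed K)
    (x0 : X) {x : ℕ → X} {μ : ℕ → Y} {b : ℕ → Y} {L : Y}
    (hx : Tendsto x atTop (𝓝 x0)) (hμ : Tendsto μ atTop (𝓝 L))
    (hb : Tendsto b atTop (𝓝 0))
    (hmemK : ∀ n, g (x n) - b n ∈ K)
    (hineq : ∀ n, ∀ y ∈ K, ⟪μ n, y - (g (x n) - b n)⟫ ≤ 0) :
    L ∈ nCone K (g x0) := by
  have hz : Tendsto (fun n => g (x n) - b n) atTop (𝓝 (g x0)) := by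
    have h1 : Tendsto (fun n => g (x n)) atTop (𝓝 (g x0)) := (hg.continuous.tendsto x0).comp hx
    simpa using h1.sub hb
  refine ⟨hKcl.mem_of_tendsto hz (Eventually.of_forall hmemK), fun y hy => ?_⟩
  have h1 : Tendsto (fun n => ⟪μ n, y - (g (x n) - b n)⟫) atTop (𝓝 ⟪L, y - g x0⟫) :=
    hμ.inner (tendsto_const_nhds.sub hz)
  exact le_of_tendsto h1 (Eventually.of_forall fun n => hineq n y hy)

/-- Auxiliary: Robinson's CQ forces any "horizon multiplier" to vanish. -/
lemma aux_rcq (g : X → Y) (K : Set Y) (x0 : X)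
    (hRob : (0 : Y) ∈ interior {y : Y | ∃ d : X, ∃ k ∈ K, y = g x0 + fderiv ℝ g x0 d - k})
    {L : Y} (hadj : ContinuousLinearMap.adjoint (fderiv ℝ g x0) L = 0)
    (hL : L ∈ nCone K (g x0)) : L = 0 := by
  by_contra hne
  obtain ⟨ε, hε, hsub⟩ := Metric.mem_nhds_iff.1 (mem_interior_iff_mem_nhds.1 hRob)
  have hLpos : (0 : ℝ) < ‖L‖ := norm_pos_iff.2 hne
  set y : Y := (-(ε / 2) * ‖L‖⁻¹) • L with hy_def
  have hymem : y ∈ Metric.ball (0 : Y) ε := by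
    rw [Metric.mem_ball, dist_zero_right, hy_def, norm_smul, Real.norm_eq_abs]
    have hnp : -(ε / 2) * ‖L‖⁻¹ ≤ 0 :=
      mul_nonpos_of_nonpos_of_nonneg (by linarith) (inv_nonneg.2 (norm_nonneg L))
    have : |(-(ε / 2) * ‖L‖⁻¹)| = (ε / 2) * ‖L‖⁻¹ := by
      rw [abs_of_nonpos hnp]; ring
    rw [this]
    have : ε / 2 * ‖L‖⁻¹ * ‖L‖ = ε / 2 := by field_simp
    rw [this]; linarith
  obtain ⟨d, k, hk, hyeq⟩ := hsub hymem
  have h1 : ⟪L, fderiv ℝ g x0 d⟫ = 0 := by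
    rw [← ContinuousLinearMap.adjoint_inner_left, hadj, inner_zero_left]
  have h2 : ⟪L, k - g x0⟫ ≤ 0 := hL.2 k hk
  have h3 : ⟪L, y⟫ = ⟪L, fderiv ℝ g x0 d⟫ - ⟪L, k - g x0⟫ := by
    rw [hyeq]
    have : g x0 + fderiv ℝ g x0 d - k = fderiv ℝ g x0 d - (k - g x0) := by abel
    rw [this, inner_sub_right]
  have h4 : (0 : ℝ) ≤ ⟪L, y⟫ := by rw [h3, h1]; linarith
  have h5 : ⟪L, y⟫ = (-(ε / 2) * ‖L‖⁻¹) * (‖L‖ * ‖L‖) := by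
    rw [hy_def, real_inner_smul_right, real_inner_self_eq_norm_mul_norm]
  have h6 : ⟪L, y⟫ < 0 := by
    rw [h5]
    have : (-(ε / 2) * ‖L‖⁻¹) * (‖L‖ * ‖L‖) = -(ε / 2) * ‖L‖ := by field_simp
    rw [this]
    have : (0:ℝ) < (ε / 2) * ‖L‖ := by positivity
    linarith
  linarith

/-- Auxiliary key lemma: near `(x̄, λ̄)` in the `x` variable and for small `(a,b)`,
multipliers are uniformly close to `λ̄`. -/
lemma aux_mult_bound (f : X → ℝ) (g : X → Y) (K : Set Y)
    (hf : ContDiff ℝ 2 f) (hg : ContDiff ℝ 2 g) (hKcl : IsClosed K)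
    (x0 : X) (l0 : Y)
    (hRob : (0 : Y) ∈ interior {y : Y | ∃ d : X, ∃ k ∈ K, y = g x0 + fderiv ℝ g x0 d - k})
    (hM : mSet f g K x0 0 0 = {l0})
    (εl : ℝ) (hεl : 0 < εl) :
    ∃ δ1 > (0:ℝ), ∀ (a : X) (b : Y) (x : X) (l : Y), ‖(a, b)‖ ≤ δ1 →
      (x, l) ∈ sKKT f g K a b → ‖x - x0‖ ≤ δ1 → ‖l - l0‖ ≤ εl := by
  by_contra hcon
  push_neg at hcon
  have hch : ∀ n : ℕ, ∃ (a : X) (b : Y) (x : X) (l : Y),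
      ‖(a, b)‖ ≤ 1 / ((n : ℝ) + 1) ∧ (x, l) ∈ sKKT f g K a b ∧
      ‖x - x0‖ ≤ 1 / ((n : ℝ) + 1) ∧ εl < ‖l - l0‖ :=
    fun n => hcon (1 / ((n : ℝ) + 1)) (by positivity)
  choose a b x l h1 h2 h3 h4 using hch
  have hone : Tendsto (fun n : ℕ => 1 / ((n : ℝ) + 1)) atTop (𝓝 0) :=
    tendsto_one_div_add_atTop_nhds_zero_nat
  have hx : Tendsto x atTop (𝓝 x0) := by
    rw [tendsto_iff_norm_sub_tendsto_zero]
    exact squeeze_zero (fun n => norm_nonneg _) h3 hone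
  have ha : Tendsto a atTop (𝓝 0) := by
    rw [tendsto_zero_iff_norm_tendsto_zero]
    exact squeeze_zero (fun n => norm_nonneg _)
      (fun n => le_trans (norm_fst_le (a n, b n)) (h1 n)) hone
  have hb : Tendsto b atTop (𝓝 0) := by
    rw [tendsto_zero_iff_norm_tendsto_zero]
    exact squeeze_zero (fun n => norm_nonneg _)
      (fun n => le_trans (norm_snd_le (a n, b n)) (h1 n)) hone
  have hstat : ∀ n, gradient f (x n)
      + ContinuousLinearMap.adjoint (fderiv ℝ g (x n)) (l n) = a n := fun n => (h2 n).1
  have hconeK : ∀ n, g (x n) - b n ∈ K := fun n => (h2 n).2.1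
  have hconeI : ∀ n, ∀ y ∈ K, ⟪l n, y - (g (x n) - b n)⟫ ≤ 0 := fun n => (h2 n).2.2
  by_cases hbdd : ∃ R : ℝ, ∀ n, ‖l n‖ ≤ R
  · -- bounded multipliers: cluster point is a multiplier at (x̄,0,0), hence = λ̄
    obtain ⟨R, hR⟩ := hbdd
    obtain ⟨L, -, φ, hφ, hlφ⟩ := (isCompact_closedBall (0 : Y) R).tendsto_subseq
      (x := l) (fun n => by simpa [Metric.mem_closedBall, dist_zero_right] using hR n)
    have hφtop : Tendsto φ atTop atTop := hφ.tendsto_atTop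
    have hLmem : L ∈ mSet f g K x0 0 0 := by
      constructor
      · have := aux_lim_stat f g hf hg x0 (c := fun _ => (1 : ℝ)) (e := fun n => a (φ n))
          (hx.comp hφtop) hlφ tendsto_const_nhds (ha.comp hφtop)
          (fun n => by simpa using hstat (φ n))
        simpa using this
      · have := aux_lim_cone g K hg hKcl x0 (b := fun n => b (φ n))
          (hx.comp hφtop) hlφ (hb.comp hφtop)
          (fun n => hconeK (φ n)) (fun n => hconeI (φ n))
        simpa using this
    have hLeq : L = l0 := by rw [hM] at hLmem; exact hLmem
    have hlim : Tendsto (fun n => ‖l (φ n) - l0‖) atTop (𝓝 0) := by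
      have : Tendsto (fun n => l (φ n) - l0) atTop (𝓝 (L - l0)) :=
        hlφ.sub tendsto_const_nhds
      rw [hLeq] at this
      simpa using this.norm
    have : εl ≤ 0 := ge_of_tendsto hlim (Eventually.of_forall fun n => le_of_lt (h4 (φ n)))
    linarith
  · -- unbounded multipliers: contradiction with Robinson's CQ
    push_neg at hbdd
    have hch2 : ∀ n : ℕ, ∃ m, (n : ℝ) + 1 < ‖l m‖ := fun n => hbdd ((n : ℝ) + 1)
    choose k hk using hch2
    have hktop : Tendsto k atTop atTop := by
      rw [Filter.tendsto_atTop]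
      intro N
      have hC : ∀ j < N, ‖l j‖ ≤ ∑ j ∈ Finset.range N, ‖l j‖ := fun j hj =>
        Finset.single_le_sum (fun i _ => norm_nonneg (l i)) (Finset.mem_range.2 hj)
      filter_upwards [eventually_ge_atTop ⌈∑ j ∈ Finset.range N, ‖l j‖⌉₊] with n hn
      by_contra hlt
      push_neg at hlt
      have h5 := hC (k n) hlt
      have h6 : (n : ℝ) + 1 < ‖l (k n)‖ := hk n
      have h7 : (∑ j ∈ Finset.range N, ‖l j‖) ≤ (⌈∑ j ∈ Finset.range N, ‖l j‖⌉₊ : ℝ) :=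
        Nat.le_ceil _
      have h8 : ((⌈∑ j ∈ Finset.range N, ‖l j‖⌉₊ : ℕ) : ℝ) ≤ (n : ℝ) := Nat.cast_le.2 hn
      linarith
    have hkpos : ∀ n, (0 : ℝ) < ‖l (k n)‖ := fun n =>
      lt_trans (by positivity) (hk n)
    set μ : ℕ → Y := fun n => ‖l (k n)‖⁻¹ • l (k n) with hμdef
    have hμsph : ∀ n, μ n ∈ Metric.sphere (0 : Y) 1 := fun n => by
      simp only [hμdef, Metric.mem_sphere, dist_zero_right, norm_smul, norm_inv, norm_norm]
      field_simp
      exact div_self (hkpos n).ne'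
    obtain ⟨L, hLsph, φ, hφ, hμφ⟩ :=
      (isCompact_sphere (0 : Y) 1).tendsto_subseq (x := μ) hμsph
    have hφtop : Tendsto φ atTop atTop := hφ.tendsto_atTop
    have hψtop : Tendsto (fun n => k (φ n)) atTop atTop := hktop.comp hφtop
    have hLnorm : ‖L‖ = 1 := by
      simpa [Metric.mem_sphere, dist_zero_right] using hLsph
    set c : ℕ → ℝ := fun n => ‖l (k (φ n))‖⁻¹ with hcdef
    have hcpos : ∀ n, (0 : ℝ) < c n := fun n => inv_pos.2 (hkpos (φ n))
    have hc0 : Tendsto c atTop (𝓝 0) := by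
      have hnorm_top : Tendsto (fun n => ‖l (k (φ n))‖) atTop atTop := by
        apply tendsto_atTop_mono (fun n => le_of_lt (hk (φ n)))
        have : Tendsto (fun n : ℕ => ((φ n : ℝ) + 1)) atTop atTop :=
          tendsto_atTop_add_const_right _ 1
            (tendsto_natCast_atTop_atTop.comp hφtop)
        exact this
      exact hnorm_top.inv_tendsto_atTop
    -- scaled stationarity
    have hstat' : ∀ n, c n • gradient f (x (k (φ n)))
        + ContinuousLinearMap.adjoint (fderiv ℝ g (x (k (φ n)))) (μ (φ n))
        = c n • a (k (φ n)) := by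
      intro n
      have := congrArg (fun v => c n • v) (hstat (k (φ n)))
      simpa [hμdef, hcdef, smul_add, map_smul] using this
    have hca : Tendsto (fun n => c n • a (k (φ n))) atTop (𝓝 0) := by
      have := hc0.smul (ha.comp hψtop)
      simpa using this
    have hadj0 : ContinuousLinearMap.adjoint (fderiv ℝ g x0) L = 0 := by
      have := aux_lim_stat f g hf hg x0 (c := c) (e := fun n => c n • a (k (φ n)))
        (hx.comp hψtop) hμφ hc0 hca hstat'
      simpa using this
    have hconeL : L ∈ nCone K (g x0) := by
      refine aux_lim_cone g K hg hKcl x0 (b := fun n => b (k (φ n)))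
        (hx.comp hψtop) hμφ (hb.comp hψtop) (fun n => hconeK (k (φ n))) ?_
      intro n y hy
      have h5 := hconeI (k (φ n)) y hy
      have h6 : c n * ⟪l (k (φ n)), y - (g (x (k (φ n))) - b (k (φ n)))⟫ ≤ 0 :=
        mul_nonpos_of_nonneg_of_nonpos (le_of_lt (hcpos n)) h5
      simpa [hμdef, hcdef, real_inner_smul_left] using h6
    have : L = 0 := aux_rcq g K x0 hRob hadj0 hconeL
    rw [this] at hLnorm
    simp at hLnorm

/-- Appendix, Proposition A.1, second part: if Robinson's CQ holds
at `x̄`, i.e. `0 ∈ int(g(x̄) + g'(x̄)X − K)`, and `M(x̄,0,0) = {λ̄}`, then the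
pseudo-isolated calmness of `X_KKT` at the origin for `x̄` (relative to `λ̄`) implies
the isolated calmness of `X_KKT` at the origin for `x̄`. -/
theorem stmt_15 (f : X → ℝ) (g : X → Y) (K : Set Y)
    (hf : ContDiff ℝ 2 f) (hg : ContDiff ℝ 2 g)
    (hKne : K.Nonempty) (hKcl : IsClosed K) (hKcv : Convex ℝ K)
    (hKred : C2ConeReducible K)
    (x0 : X) (l0 : Y) (hKKT : (x0, l0) ∈ sKKT f g K 0 0)
    (hRob : (0 : Y) ∈ interior {y : Y | ∃ d : X, ∃ k ∈ K, y = g x0 + fderiv ℝ g x0 d - k})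
    (hM : mSet f g K x0 0 0 = {l0})
    (hpic : PseudoIsolatedCalm f g K x0 l0) :
    IsolatedCalm (fun q : X × Y => xKKT f g K q.1 q.2) ((0 : X), (0 : Y)) x0 := by
  obtain ⟨ε, δ, κ, hε, hδ, hκ, hpi⟩ := hpic
  obtain ⟨δ1, hδ1, hkey⟩ := aux_mult_bound f g K hf hg hKcl x0 l0 hRob hM ε hε
  refine ⟨κ, min δ δ1, min ε δ1, hκ, lt_min hδ hδ1, lt_min hε hδ1, ?_⟩
  rintro ⟨av, bv⟩ hz w hw hwx
  simp only [Prod.mk_sub_mk, sub_zero, Prod.sub_def] at hz ⊢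
  obtain ⟨lw, hlw⟩ := hw
  have hab1 : ‖(av, bv)‖ ≤ δ1 := le_trans hz (min_le_right _ _)
  have habδ : ‖(av, bv)‖ ≤ δ := le_trans hz (min_le_left _ _)
  have hwx1 : ‖w - x0‖ ≤ δ1 := le_trans hwx (min_le_right _ _)
  have hwxε : ‖w - x0‖ ≤ ε := le_trans hwx (min_le_left _ _)
  have hl : ‖lw - l0‖ ≤ ε := hkey av bv w lw hab1 hlw hwx1
  have hnear : ‖(w, lw) - (x0, l0)‖ ≤ ε := by
    rw [Prod.norm_def]
    exact max_le hwxε hl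
  exact hpi av bv habδ w lw hlw hnear

end
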